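/- There exists a countably infinite set S ⊆ [0,1)^ℕ such that: (i) S has nonempty intersection with every cube in [0,1)^ℕ, and (ii) the map (a, n) ↦ a(n) from S × ℕ to [0,1) is injective. -/

import Mathlib

open Set

noncomputable section StmtAux

abbrev Idx5 := ℕ →₀ (ℚ × ℚ)

lemma exists_enum5 : ∃ e : ℕ → Idx5, Function.Surjective e := exists_surjective_nat Idx5

def e5 : ℕ → Idx5 := exists_enum5.choose
lemma e5_surj : Function.Surjective e5 := exists_enum5.choose_spec

def cond5 (g : Idx5) (n : ℕ) : Prop :=
  0 ≤ (g n).1 ∧ (g n).1 < (g n).2 + 1 ∧ (g n).2 + 1 ≤ 1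

instance (g : Idx5) (n : ℕ) : Decidable (cond5 g n) := by unfold cond5; infer_instance

def L5 (g : Idx5) (n : ℕ) : ℝ := if cond5 g n then ((g n).1 : ℝ) else 0
def U5 (g : Idx5) (n : ℕ) : ℝ := if cond5 g n then ((g n).2 : ℝ) + 1 else 1

lemma LU5 (g : Idx5) (n : ℕ) : 0 ≤ L5 g n ∧ L5 g n < U5 g n ∧ U5 g n ≤ 1 := by
  unfold L5 U5
  split
  · rename_i h
    obtain ⟨h1, h2, h3⟩ := h
    refine ⟨by exact_mod_cast h1, by exact_mod_cast h2, by exact_mod_cast h3⟩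
  · exact ⟨le_refl 0, zero_lt_one, le_refl 1⟩

lemma key5 (m : ℕ) (prev : ℕ → ℝ) :
    (Ico (L5 (e5 m.unpair.1) m.unpair.2) (U5 (e5 m.unpair.1) m.unpair.2)
      \ (prev '' Iio m)).Nonempty :=
  ((Set.Ico_infinite (LU5 _ _).2.1).diff ((Set.finite_Iio m).image prev)).nonempty

def f5 : ℕ → ℝ
  | m => (key5 m (fun m' => if _ : m' < m then f5 m' else 0)).choose

lemma f5_spec (m : ℕ) :
    f5 m ∈ Ico (L5 (e5 m.unpair.1) m.unpair.2) (U5 (e5 m.unpair.1) m.unpair.2)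
      \ ((fun m' => if _ : m' < m then f5 m' else 0) '' Iio m) := by
  rw [f5]
  exact (key5 m _).choose_spec

lemma f5_mem (m : ℕ) :
    f5 m ∈ Ico (L5 (e5 m.unpair.1) m.unpair.2) (U5 (e5 m.unpair.1) m.unpair.2) :=
  (f5_spec m).1

lemma f5_ne (m m' : ℕ) (h : m' < m) : f5 m ≠ f5 m' := by
  intro he
  apply (f5_spec m).2
  exact ⟨m', h, by simp [h, he]⟩

lemma f5_inj : Function.Injective f5 := by
  intro m m' h
  rcases lt_trichotomy m m' with hl | he | hl
  · exact absurd h.symm (f5_ne m' m hl)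
  · exact he
  · exact absurd h (f5_ne m m' hl)

def a5 (k : ℕ) (n : ℕ) : ℝ := f5 (Nat.pair k n)

lemma a5_mem (k n : ℕ) : a5 k n ∈ Ico (L5 (e5 k) n) (U5 (e5 k) n) := by
  have := f5_mem (Nat.pair k n)
  rwa [Nat.unpair_pair] at this

lemma a5_inj (k n k' n' : ℕ) (h : a5 k n = a5 k' n') : k = k' ∧ n = n' := by
  have := f5_inj h
  have h2 : (k, n) = (k', n') := by
    have := congrArg Nat.unpair this
    rwa [Nat.unpair_pair, Nat.unpair_pair] at this
  exact ⟨congrArg Prod.fst h2, congrArg Prod.snd h2⟩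

end StmtAux

/-- A cube in `[0,1)^ℕ`: a product `∏ₙ [lₙ, uₙ)` with `0 ≤ lₙ < uₙ ≤ 1`,
and `lₙ = 0`, `uₙ = 1` for all but finitely many `n`. -/
def IsCube (C : Set (ℕ → ℝ)) : Prop :=
  ∃ l u : ℕ → ℝ, (∀ n, 0 ≤ l n ∧ l n < u n ∧ u n ≤ 1) ∧
    {n | ¬ (l n = 0 ∧ u n = 1)}.Finite ∧
    C = {a | ∀ n, a n ∈ Set.Ico (l n) (u n)}

theorem stmt5 :
    ∃ S : Set (ℕ → ℝ),
      (∀ a ∈ S, ∀ n, a n ∈ Set.Ico (0 : ℝ) 1) ∧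
      S.Countable ∧ S.Infinite ∧
      (∀ C : Set (ℕ → ℝ), IsCube C → (S ∩ C).Nonempty) ∧
      (∀ a ∈ S, ∀ a' ∈ S, ∀ n n' : ℕ, a n = a' n' → a = a' ∧ n = n') := by
  classical
  refine ⟨Set.range a5, ?_, Set.countable_range a5, ?_, ?_, ?_⟩
  · rintro a ⟨k, rfl⟩ n
    have h := a5_mem k n
    have hb := LU5 (e5 k) n
    exact ⟨le_trans hb.1 h.1, lt_of_lt_of_le h.2 hb.2.2⟩
  · apply Set.infinite_range_of_injective
    intro k k' h
    exact (a5_inj k 0 k' 0 (congrFun h 0)).1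
  · rintro C ⟨l, u, hlu, hfin, rfl⟩
    -- choose rationals
    have hq : ∀ n, ∃ q : ℚ, l n < q ∧ (q : ℝ) < u n := fun n => exists_rat_btwn (hlu n).2.1
    choose q hq1 hq2 using hq
    have hr : ∀ n, ∃ r : ℚ, (q n : ℝ) < r ∧ (r : ℝ) < u n := fun n => exists_rat_btwn (hq2 n)
    choose r hr1 hr2 using hr
    set h : ℕ → ℚ × ℚ := fun n => if l n = 0 ∧ u n = 1 then 0 else (q n, r n - 1) with hh
    have hsupp : (Function.support h).Finite := by
      apply hfin.subset
      intro n hn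
      simp only [Function.mem_support, hh] at hn
      intro hc
      simp [hc] at hn
    set g : Idx5 := Finsupp.ofSupportFinite h hsupp with hg
    obtain ⟨k, hk⟩ := e5_surj g
    refine ⟨a5 k, ⟨k, rfl⟩, fun n => ?_⟩
    have hmem := a5_mem k n
    rw [hk] at hmem
    have hgn : g n = h n := rfl
    by_cases hc : l n = 0 ∧ u n = 1
    · have hgn0 : g n = (0, 0) := by rw [hgn, hh]; simp [hc]; rfl
      have hcond : cond5 g n := by
        rw [cond5, hgn0]; norm_num
      rw [L5, U5, if_pos hcond, if_pos hcond, hgn0] at hmem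
      simp at hmem
      rw [hc.1, hc.2]
      exact_mod_cast hmem
    · have hgn0 : g n = (q n, r n - 1) := by rw [hgn, hh]; simp [hc]
      have hq0 : (0 : ℚ) ≤ q n := by
        have : (0 : ℝ) ≤ q n := le_trans (hlu n).1 (le_of_lt (hq1 n))
        exact_mod_cast this
      have hqr : q n < r n := by exact_mod_cast hr1 n
      have hr1' : (r n : ℚ) ≤ 1 := by
        have : (r n : ℝ) < 1 := lt_of_lt_of_le (hr2 n) (hlu n).2.2
        exact_mod_cast le_of_lt this
      have hcond : cond5 g n := by
        rw [cond5, hgn0]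
        refine ⟨hq0, ?_, ?_⟩ <;> simp only [hgn0] <;> linarith
      rw [L5, U5, if_pos hcond, if_pos hcond, hgn0] at hmem
      simp only at hmem
      constructor
      · exact le_trans (le_of_lt (hq1 n)) hmem.1
      · refine lt_of_lt_of_le hmem.2 ?_
        have : ((r n - 1 : ℚ) : ℝ) + 1 = (r n : ℝ) := by push_cast; ring
        rw [this]
        exact le_of_lt (hr2 n)
  · rintro a ⟨k, rfl⟩ a' ⟨k', rfl⟩ n n' hEq
    obtain ⟨hk, hn⟩ := a5_inj k n k' n' hEq
    exact ⟨by rw [hk], hn⟩
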